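/- Let k be an algebraically closed field of characteristic ≠ 2. In the setting of the previous bracket on V ⊕ W of rank (1|1)-type weight spaces with n = λ₁ − λ₂ > 1: define on V = V(λ) = Sym_n(std)* ⊗ det^{λ₁} and W = V(λ*) the bracket [ , ] = [ , ]₁ + [ , ]₂ with [ , ]₁ into k·I₂ given by d_i = (−1)^i binom(n,i) d and [ , ]₂ into 𝔰𝔩₂ given by the unique (up to scalar a) SL₂-equivariant pairing, with [V,V] = [W,W] = 0. If a ≠ 0, then there exists v ∈ V ⊕ W with [[v, v], v] ≠ 0. Concretely, for v = s₀* ⊗ det^{λ₁} + t_{n−1}* ⊗ det^{−λ₂} one has [v, v] = 2aE_{1,−1} and [[v, v], v] = −4a·t_{n−2}* ⊗ det^{−λ₂} ≠ 0. -/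

import Mathlib

open Matrix
open scoped BigOperators

/-- E_{1,-1}. -/
def Epl (k : Type) [Field k] : Matrix (Fin 2) (Fin 2) k := !![0, 1; 0, 0]
/-- E_{-1,1}. -/
def Emn (k : Type) [Field k] : Matrix (Fin 2) (Fin 2) k := !![0, 0; 1, 0]
/-- H. -/
def Hm (k : Type) [Field k] : Matrix (Fin 2) (Fin 2) k := !![1, 0; 0, -1]

/-- Action of E_{1,-1} on Sym_n(V)* in the dual weight basis s₀*, …, s_n*:
E_{1,-1} s_i* = −(n−i+1) s_{i−1}*. -/
def actE {k : Type} [Field k] {n : ℕ} (f : Fin (n + 1) → k) : Fin (n + 1) → k :=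
  fun i => if h : (i : ℕ) + 1 < n + 1 then (-((n : k) - ((i : ℕ) : k))) * f ⟨(i : ℕ) + 1, h⟩ else 0

/-- Action of E_{-1,1} on Sym_n(V)*: E_{-1,1} s_i* = −(i+1) s_{i+1}*. -/
def actF {k : Type} [Field k] {n : ℕ} (f : Fin (n + 1) → k) : Fin (n + 1) → k :=
  fun i => if (i : ℕ) = 0 then 0
    else (-((i : ℕ) : k)) * f ⟨(i : ℕ) - 1, Nat.lt_of_le_of_lt (Nat.sub_le _ _) i.isLt⟩

/-- Action of H on Sym_n(V)*: H s_i* = (n − 2i) s_i*. -/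
def actH {k : Type} [Field k] {n : ℕ} (f : Fin (n + 1) → k) : Fin (n + 1) → k :=
  fun i => ((n : k) - 2 * ((i : ℕ) : k)) * f i

/-- The 𝔤𝔩₂-action on V(λ) = Sym_n(V)* ⊗ det^{λ₁}: a matrix m = m₀₁E₊ + m₁₀E₋ + τ'H + τI₂
acts by the standard 𝔰𝔩₂-formulas, the identity I₂ acting by the central weight κ. -/
def glActV {k : Type} [Field k] {n : ℕ} (κ : k) (m : Matrix (Fin 2) (Fin 2) k)
    (f : Fin (n + 1) → k) : Fin (n + 1) → k :=
  m 0 1 • actE f + m 1 0 • actF f + ((m 0 0 - m 1 1) / 2) • actH f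
    + (((m 0 0 + m 1 1) / 2) * κ) • f

/-- The 𝔤𝔩₂-action on V(λ) ⊕ V(λ*); the central weight on the second summand is −κ. -/
def glActVW {k : Type} [Field k] {n : ℕ} (κ : k) (m : Matrix (Fin 2) (Fin 2) k)
    (v : (Fin (n + 1) → k) × (Fin (n + 1) → k)) :
    (Fin (n + 1) → k) × (Fin (n + 1) → k) :=
  (glActV κ m v.1, glActV (-κ) m v.2)

/-- Value of the bracket [s_i* ⊗ det^{λ₁}, t_j* ⊗ det^{−λ₂}] ∈ 𝔤𝔩₂: the 𝔷-part given by
d_i = (−1)^i·C(n,i)·d on i + j = n, and the 𝔰𝔩₂-part given by the formulas (∘∘):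
a_i = (−1)^i/2·(C(n−1,i) − C(n−1,i−1))·a on i + j = n, b_i = (−1)^i·C(n−1,i)·a on
i + j = n − 1, c_i = (−1)^i·C(n−1,i−1)·a on i + j = n + 1. -/
def pairCoeff (k : Type) [Field k] (a d : k) (n : ℕ) (i j : ℕ) :
    Matrix (Fin 2) (Fin 2) k :=
  (if i + j = n then
      ((-1 : k) ^ i / 2 *
        ((Nat.choose (n - 1) i : k) -
          (if i = 0 then 0 else (Nat.choose (n - 1) (i - 1) : k))) * a) • Hm k
      + ((-1 : k) ^ i * (Nat.choose n i : k) * d) • (1 : Matrix (Fin 2) (Fin 2) k)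
    else 0)
  + (if i + j + 1 = n then ((-1 : k) ^ i * (Nat.choose (n - 1) i : k) * a) • Epl k else 0)
  + (if i + j = n + 1 then
      ((-1 : k) ^ i * (if i = 0 then 0 else (Nat.choose (n - 1) (i - 1) : k)) * a) • Emn k
    else 0)

/-- The symmetric bilinear extension of the bracket V(λ) × V(λ*) → 𝔤𝔩₂,
with [V(λ), V(λ)] = [V(λ*), V(λ*)] = 0. -/
def pairBr {k : Type} [Field k] (a d : k) (n : ℕ)
    (v w : (Fin (n + 1) → k) × (Fin (n + 1) → k)) : Matrix (Fin 2) (Fin 2) k :=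
  ∑ i : Fin (n + 1), ∑ j : Fin (n + 1),
    (v.1 i * w.2 j + w.1 i * v.2 j) • pairCoeff k a d n (i : ℕ) (j : ℕ)


lemma brval {k : Type} [Field k] (a d : k) (n : ℕ) (hn : 1 < n)
    (h0 : 0 < n + 1) (h1 : n - 1 < n + 1) :
    pairBr a d n
      (Pi.single (⟨0, h0⟩ : Fin (n + 1)) 1, Pi.single (⟨n - 1, h1⟩ : Fin (n + 1)) 1)
      (Pi.single (⟨0, h0⟩ : Fin (n + 1)) 1, Pi.single (⟨n - 1, h1⟩ : Fin (n + 1)) 1)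
      = (2 * a) • Epl k := by
  unfold pairBr
  rw [Finset.sum_eq_single (⟨0, h0⟩ : Fin (n + 1))]
  · rw [Finset.sum_eq_single (⟨n - 1, h1⟩ : Fin (n + 1))]
    · simp only [Pi.single_eq_same, one_mul, mul_one]
      have hc : pairCoeff k a d n 0 (n - 1) = a • Epl k := by
        unfold pairCoeff
        rw [if_neg (by omega), if_pos (by omega), if_neg (by omega)]
        simp
      rw [hc, smul_smul]
      ring_nf
    · intro j _ hj
      have hz : (Pi.single (⟨n - 1, h1⟩ : Fin (n + 1)) 1 : Fin (n + 1) → k) j = 0 := Pi.single_eq_of_ne hj _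
      simp only [hz, mul_zero, add_zero, zero_smul]
    · intro h; exact absurd (Finset.mem_univ _) h
  · intro i _ hi
    have hz : (Pi.single (⟨0, h0⟩ : Fin (n + 1)) 1 : Fin (n + 1) → k) i = 0 := Pi.single_eq_of_ne hi _
    simp only [hz, zero_mul, add_zero, zero_smul, Finset.sum_const_zero]
  · intro h; exact absurd (Finset.mem_univ _) h

lemma actval {k : Type} [Field k] (a κ : k) (n : ℕ) (hn : 1 < n)
    (h0 : 0 < n + 1) (h1 : n - 1 < n + 1) (h2 : n - 2 < n + 1) :
    glActVW κ ((2 * a) • Epl k)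
      (Pi.single (⟨0, h0⟩ : Fin (n + 1)) 1, Pi.single (⟨n - 1, h1⟩ : Fin (n + 1)) 1)
      = (0, (-(4 * a)) • (Pi.single (⟨n - 2, h2⟩ : Fin (n + 1)) (1 : k) : Fin (n + 1) → k)) := by
  have e01 : ((2 * a) • Epl k) 0 1 = 2 * a := by simp [Epl]
  have e10 : ((2 * a) • Epl k) 1 0 = 0 := by simp [Epl]
  have e00 : ((2 * a) • Epl k) 0 0 = 0 := by simp [Epl]
  have e11 : ((2 * a) • Epl k) 1 1 = 0 := by simp [Epl]
  have hE0 : actE (Pi.single (⟨0, h0⟩ : Fin (n + 1)) (1 : k)) = 0 := by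
    funext i
    unfold actE
    split
    · rename_i h
      have hne : (⟨(i : ℕ) + 1, h⟩ : Fin (n + 1)) ≠ ⟨0, h0⟩ := by
        intro he; rw [Fin.mk.injEq] at he; omega
      rw [Pi.single_apply, if_neg hne, mul_zero]; rfl
    · simp
  have hE1 : actE (Pi.single (⟨n - 1, h1⟩ : Fin (n + 1)) (1 : k))
      = (-2 : k) • (Pi.single (⟨n - 2, h2⟩ : Fin (n + 1)) (1 : k) : Fin (n + 1) → k) := by
    funext i
    unfold actE
    by_cases hc : (i : ℕ) = n - 2
    · rw [dif_pos (by omega)]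
      have hidx : (⟨(i : ℕ) + 1, by omega⟩ : Fin (n + 1)) = ⟨n - 1, h1⟩ := by
        simp only [Fin.mk.injEq]; omega
      rw [hidx, Pi.single_eq_same]
      have hi2 : i = (⟨n - 2, h2⟩ : Fin (n + 1)) := Fin.ext hc
      rw [hi2]
      simp only [Pi.smul_apply, Pi.single_eq_same, smul_eq_mul]
      have : (((⟨n - 2, h2⟩ : Fin (n + 1)) : ℕ) : k) = (n : k) - 2 := by
        show (((n - 2 : ℕ)) : k) = (n : k) - 2
        rw [Nat.cast_sub (by omega : 2 ≤ n)]; norm_num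
      rw [this]; ring
    · have hne : i ≠ (⟨n - 2, h2⟩ : Fin (n + 1)) := by
        intro h; exact hc (by rw [h])
      rw [Pi.smul_apply, Pi.single_eq_of_ne hne, smul_zero]
      split
      · rw [Pi.single_eq_of_ne (by simp only [ne_eq, Fin.mk.injEq]; omega), mul_zero]
      · rfl
  unfold glActVW glActV
  rw [e01, e10, e00, e11]
  rw [Prod.mk.injEq]
  constructor
  · rw [hE0]
    simp
  · rw [hE1, smul_smul]
    have h4 : 2 * a * (-2 : k) = -(4 * a) := by ring
    rw [h4]
    simp

/-- for n = λ₁ − λ₂ > 1 and a ≠ 0, the cubic identity fails: concretely, for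
v = s₀* ⊗ det^{λ₁} + t_{n−1}* ⊗ det^{−λ₂} one has [v, v] = 2aE_{1,−1} and
[[v, v], v] = −4a · t_{n−2}* ⊗ det^{−λ₂} ≠ 0; in particular some v has [[v, v], v] ≠ 0. -/
theorem stmt13 {k : Type} [Field k] [IsAlgClosed k] (hchar : ringChar k ≠ 2)
    (n : ℕ) (hn : 1 < n) (a d κ : k) (ha : a ≠ 0) :
    pairBr a d n
        (Pi.single (⟨0, by omega⟩ : Fin (n + 1)) 1,
          Pi.single (⟨n - 1, by omega⟩ : Fin (n + 1)) 1)
        (Pi.single (⟨0, by omega⟩ : Fin (n + 1)) 1,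
          Pi.single (⟨n - 1, by omega⟩ : Fin (n + 1)) 1) = (2 * a) • Epl k ∧
    glActVW κ
        (pairBr a d n
          (Pi.single (⟨0, by omega⟩ : Fin (n + 1)) 1,
            Pi.single (⟨n - 1, by omega⟩ : Fin (n + 1)) 1)
          (Pi.single (⟨0, by omega⟩ : Fin (n + 1)) 1,
            Pi.single (⟨n - 1, by omega⟩ : Fin (n + 1)) 1))
        (Pi.single (⟨0, by omega⟩ : Fin (n + 1)) 1,
          Pi.single (⟨n - 1, by omega⟩ : Fin (n + 1)) 1) =
      (0, (-(4 * a)) • (Pi.single (⟨n - 2, by omega⟩ : Fin (n + 1)) (1 : k) : Fin (n + 1) → k)) ∧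
    ∃ v : (Fin (n + 1) → k) × (Fin (n + 1) → k),
      glActVW κ (pairBr a d n v v) v ≠ 0 := by
  have hbr := brval a d n hn (by omega) (by omega)
  have hact := actval a κ n hn (by omega) (by omega) (by omega)
  refine ⟨hbr, by rw [hbr]; exact hact, ?_⟩
  refine ⟨(Pi.single (⟨0, by omega⟩ : Fin (n + 1)) 1,
    Pi.single (⟨n - 1, by omega⟩ : Fin (n + 1)) 1), ?_⟩
  rw [hbr, hact]
  intro h
  have h2 : (2 : k) ≠ 0 := Ring.two_ne_zero hchar
  have h4 : -(4 * a) ≠ 0 := by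
    intro h'
    have : (2 : k) * 2 * a = 0 := by linear_combination -h'
    rcases mul_eq_zero.mp this with h'' | h''
    · rcases mul_eq_zero.mp h'' with h3 | h3 <;> exact h2 h3
    · exact ha h''
  have := congrArg Prod.snd h
  simp only [Prod.snd_zero] at this
  have hv := congrFun this (⟨n - 2, by omega⟩ : Fin (n + 1))
  rw [Pi.smul_apply, Pi.single_eq_same, smul_eq_mul, mul_one] at hv
  exact h4 (by simpa using hv)
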